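/- Assume the SCAR assumption e(x) = e_m for all x ∈ ℝ^d with 0 < e_m ≤ 1, that S has VC dimension V ≥ 2, and let h ∈ (0,1]. Then for every 0 < p < 1/(V−1), the minimax risk satisfies R(S,h) ≥ (p·h/4)·(V−1)·(1 − √(2·p·e_m·h²·n)). -/

import Mathlib

open MeasureTheory ProbabilityTheory Real Filter Topology

noncomputable section

/-- A classifier: a measurable `{0,1}`-valued function on the feature space. -/
def IsClassifier {α : Type*} [MeasurableSpace α] (g : α → ℝ) : Prop :=
  Measurable g ∧ ∀ x, g x = 0 ∨ g x = 1

/-- `η` is a version of the regression function `x ↦ P(Y = 1 ∣ X = x)`. -/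
def IsRegression {Ω α : Type*} [MeasurableSpace Ω] [MeasurableSpace α]
    (P : Measure Ω) (X : Ω → α) (Y : Ω → ℝ) (η : α → ℝ) : Prop :=
  Measurable η ∧ (∀ x, 0 ≤ η x ∧ η x ≤ 1) ∧
    ∀ A : Set α, MeasurableSet A →
      ∫ ω in X ⁻¹' A, Y ω ∂P = ∫ ω in X ⁻¹' A, η (X ω) ∂P

/-- `e` is the propensity: `P(S = 1 ∣ Y = 1, X = x) = e x` and
`P(S = 1 ∣ Y = 0, X = x) = 0` (the latter is equivalent to `S ≤ Y` a.s.). -/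
def IsPropensity {Ω α : Type*} [MeasurableSpace Ω] [MeasurableSpace α]
    (P : Measure Ω) (X : Ω → α) (Y S : Ω → ℝ) (e : α → ℝ) : Prop :=
  Measurable e ∧ (∀ x, 0 ≤ e x ∧ e x ≤ 1) ∧
    (∀ᵐ ω ∂P, S ω ≤ Y ω) ∧
    ∀ A : Set α, MeasurableSet A →
      ∫ ω in X ⁻¹' A, S ω ∂P = ∫ ω in X ⁻¹' A, e (X ω) * Y ω ∂P

/-- Misclassification risk `R(g) = P(g(X) ≠ Y)`. -/
def risk {Ω α : Type*} [MeasurableSpace Ω]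
    (P : Measure Ω) (X : Ω → α) (Y : Ω → ℝ) (g : α → ℝ) : ℝ :=
  (P {ω | g (X ω) ≠ Y ω}).toReal

/-- The Bayes classifier `g*(x) = 1{η(x) ≥ 1/2}`. -/
def bayes {α : Type*} (η : α → ℝ) : α → ℝ := fun x => if (1 : ℝ) / 2 ≤ η x then 1 else 0

/-- Excess risk `ℓ(g, g*) = R(g) − R(g*)`. -/
def excessRisk {Ω α : Type*} [MeasurableSpace Ω]
    (P : Measure Ω) (X : Ω → α) (Y : Ω → ℝ) (η : α → ℝ) (g : α → ℝ) : ℝ :=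
  risk P X Y g - risk P X Y (bayes η)

/-- The SAR loss `r_SAR(g,(x,s)) = (1{s=1}/e(x))·(2·1{g(x)≠1} − 1) + 1{g(x)≠0}`. -/
def rSAR {α : Type*} (e : α → ℝ) (g : α → ℝ) (p : α × ℝ) : ℝ :=
  (if p.2 = 1 then (1 : ℝ) else 0) / e p.1 * (2 * (if g p.1 ≠ 1 then (1 : ℝ) else 0) - 1)
    + (if g p.1 ≠ 0 then (1 : ℝ) else 0)

/-- Empirical risk `(1/n)·Σ_{i=1}^n r(g,(X_i,S_i))` of a generic loss `r` on an `n`-sample. -/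
def empRisk {Ω α : Type*} (r : (α → ℝ) → α × ℝ → ℝ) (X : Ω → α) (S : Ω → ℝ) (n : ℕ)
    (g : α → ℝ) (ω : Fin n → Ω) : ℝ :=
  (1 / (n : ℝ)) * ∑ i : Fin n, r g (X (ω i), S (ω i))

/-- A finite set of points is shattered by the class `𝒮`: every labeling is realized. -/
def Shatters {α : Type*} (𝒮 : Set (α → ℝ)) {k : ℕ} (x : Fin k → α) : Prop :=
  ∀ b : Fin k → Bool, ∃ g ∈ 𝒮, ∀ i, g (x i) = if b i then 1 else 0

/-- The class `𝒮` has VC dimension exactly `V`. -/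
def HasVCDim {α : Type*} (𝒮 : Set (α → ℝ)) (V : ℕ) : Prop :=
  (∃ x : Fin V → α, Shatters 𝒮 x) ∧ ∀ x : Fin (V + 1) → α, ¬ Shatters 𝒮 x

/-- Separability assumption (A₁): a countable subclass `𝒮' ⊆ 𝒮` that is dense in
the sense of pointwise convergence of the loss `r`. -/
def SeparableClass {α : Type*} (r : (α → ℝ) → α × ℝ → ℝ) (𝒮 𝒮' : Set (α → ℝ)) : Prop :=
  𝒮' ⊆ 𝒮 ∧ 𝒮'.Countable ∧
    ∀ g ∈ 𝒮, ∃ u : ℕ → α → ℝ, (∀ k, u k ∈ 𝒮') ∧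
      ∀ p : α × ℝ, Tendsto (fun k => r (u k) p) atTop (𝓝 (r g p))

/-- The set of admissible distributions for the minimax risk: `μ` is the joint law of
`(X, Y, S)`, with regression function `η` satisfying the Massart noise condition with
margin `h`, Bayes classifier in `𝒮`, and propensity `e`. -/
def PUAdmissible {α : Type*} [MeasurableSpace α] (e : α → ℝ) (𝒮 : Set (α → ℝ)) (h : ℝ)
    (μ : Measure (α × ℝ × ℝ)) (η : α → ℝ) : Prop :=
  IsProbabilityMeasure μ ∧
    (∀ᵐ p ∂μ, (p.2.1 = 0 ∨ p.2.1 = 1) ∧ (p.2.2 = 0 ∨ p.2.2 = 1)) ∧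
    IsRegression μ (fun p => p.1) (fun p => p.2.1) η ∧
    IsPropensity μ (fun p => p.1) (fun p => p.2.1) (fun p => p.2.2) e ∧
    bayes η ∈ 𝒮 ∧ (∀ x, h ≤ |2 * η x - 1|)

/-- Minimax risk: infimum over estimators (functions of the observed `(X_i, S_i)` sample,
valued in `𝒮`) of the supremum over admissible distributions of the expected excess risk. -/
def minimaxRisk {α : Type*} [MeasurableSpace α] (e : α → ℝ) (𝒮 : Set (α → ℝ)) (h : ℝ)
    (n : ℕ) : ℝ :=
  ⨅ ghat : {f : (Fin n → α × ℝ) → α → ℝ // ∀ z, f z ∈ 𝒮},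
    ⨆ q : {q : Measure (α × ℝ × ℝ) × (α → ℝ) // PUAdmissible e 𝒮 h q.1 q.2},
      ∫ z, excessRisk q.1.1 (fun p => p.1) (fun p => p.2.1) q.1.2 (ghat.1 z)
        ∂(Measure.pi fun _ : Fin n => q.1.1.map (fun p => (p.1, p.2.2)))

open scoped ENNReal Classical


noncomputable section Atomic
variable {ι β : Type*} [Fintype ι] [MeasurableSpace β] [MeasurableSingletonClass β]

/-- A finitely-atomic measure. -/
def atomicMeasure (w : ι → ℝ) (z : ι → β) : Measure β :=
  ∑ a : ι, ENNReal.ofReal (w a) • Measure.dirac (z a)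

lemma atomic_apply (w : ι → ℝ) (z : ι → β) (s : Set β) :
    atomicMeasure w z s = ∑ a : ι, ENNReal.ofReal (w a) * s.indicator 1 (z a) := by
  simp [atomicMeasure, Measure.coe_finset_sum, Measure.smul_apply, Measure.dirac_apply,
    Finset.sum_apply, smul_eq_mul]

lemma atomic_apply_ne_top (w : ι → ℝ) (z : ι → β) (s : Set β) :
    atomicMeasure w z s ≠ ∞ := by
  rw [atomic_apply]
  refine (ENNReal.sum_lt_top.2 fun a _ => ?_).ne
  refine ENNReal.mul_lt_top ENNReal.ofReal_lt_top ?_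
  by_cases h : z a ∈ s <;> simp [Set.indicator_apply, h]

lemma atomic_apply_toReal {w : ι → ℝ} (hw : ∀ a, 0 ≤ w a) (z : ι → β) (s : Set β) :
    (atomicMeasure w z s).toReal = ∑ a : ι, if z a ∈ s then w a else 0 := by
  rw [atomic_apply, ENNReal.toReal_sum]
  · refine Finset.sum_congr rfl fun a _ => ?_
    by_cases h : z a ∈ s <;>
      simp [Set.indicator_apply, h, ENNReal.toReal_ofReal (hw a)]
  · intro a _
    refine (ENNReal.mul_lt_top ENNReal.ofReal_lt_top ?_).ne
    by_cases h : z a ∈ s <;> simp [Set.indicator_apply, h]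

instance (w : ι → ℝ) (z : ι → β) : IsFiniteMeasure (atomicMeasure w z) :=
  ⟨lt_of_le_of_ne le_top (atomic_apply_ne_top w z _)⟩

lemma atomic_isProbability {w : ι → ℝ} (hw : ∀ a, 0 ≤ w a) (hsum : ∑ a : ι, w a = 1)
    (z : ι → β) : IsProbabilityMeasure (atomicMeasure w z) := by
  constructor
  rw [atomic_apply]
  simp only [Set.indicator_apply, Set.mem_univ, if_true, Pi.one_apply, mul_one]
  rw [← ENNReal.ofReal_sum_of_nonneg fun a _ => hw a, hsum, ENNReal.ofReal_one]

omit [Fintype ι] in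
lemma integrable_dirac'' (f : β → ℝ) (b : β) : Integrable f (Measure.dirac b) := by
  constructor
  · refine ⟨fun _ => f b, stronglyMeasurable_const, ?_⟩
    refine (ae_iff.2 ?_)
    refine measure_mono_null (fun x hx => ?_) (?_ : Measure.dirac b {b}ᶜ = 0)
    · simp only [Set.mem_compl_iff, Set.mem_singleton_iff]
      intro h; exact hx (by rw [h])
    · simp [Measure.dirac_apply, Set.indicator_apply]
  · simp [HasFiniteIntegral, lintegral_dirac]

lemma integral_atomic {w : ι → ℝ} (hw : ∀ a, 0 ≤ w a) (z : ι → β) (f : β → ℝ) :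
    ∫ x, f x ∂(atomicMeasure w z) = ∑ a : ι, w a * f (z a) := by
  rw [atomicMeasure, integral_finset_sum_measure (fun a _ =>
    (integrable_dirac'' f (z a)).smul_measure ENNReal.ofReal_ne_top)]
  refine Finset.sum_congr rfl fun a _ => ?_
  rw [integral_smul_measure, integral_dirac, ENNReal.toReal_ofReal (hw a), smul_eq_mul]

lemma setIntegral_atomic {w : ι → ℝ} (hw : ∀ a, 0 ≤ w a) (z : ι → β) (f : β → ℝ)
    {s : Set β} (hs : MeasurableSet s) :
    ∫ x in s, f x ∂(atomicMeasure w z) = ∑ a : ι, if z a ∈ s then w a * f (z a) else 0 := by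
  rw [← integral_indicator hs, integral_atomic hw]
  refine Finset.sum_congr rfl fun a _ => ?_
  by_cases h : z a ∈ s <;> simp [Set.indicator_apply, h]

omit [Fintype ι] [MeasurableSingletonClass β] in
lemma map_finset_sum'' {γ : Type*} [MeasurableSpace γ] {φ : β → γ} (hφ : Measurable φ)
    (s : Finset ι) (μ : ι → Measure β) :
    (∑ i ∈ s, μ i).map φ = ∑ i ∈ s, (μ i).map φ := by
  classical
  induction s using Finset.induction with
  | empty => simp
  | @insert _ _ h ih => rw [Finset.sum_insert h, Finset.sum_insert h, Measure.map_add _ _ hφ, ih]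

lemma map_atomic {γ : Type*} [MeasurableSpace γ] [MeasurableSingletonClass γ]
    (w : ι → ℝ) (z : ι → β) {φ : β → γ} (hφ : Measurable φ) :
    (atomicMeasure w z).map φ = atomicMeasure w (fun a => φ (z a)) := by
  rw [atomicMeasure, map_finset_sum'' hφ]
  exact Finset.sum_congr rfl fun a _ => by rw [Measure.map_smul, Measure.map_dirac' hφ]

lemma ae_atomic {w : ι → ℝ} {z : ι → β} {p : β → Prop}
    (h : ∀ a, w a ≠ 0 → p (z a)) : ∀ᵐ x ∂(atomicMeasure w z), p x := by
  rw [ae_iff, atomic_apply]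
  refine Finset.sum_eq_zero fun a _ => ?_
  by_cases hp : p (z a)
  · simp [Set.indicator_apply, hp]
  · have : w a = 0 := by by_contra hw; exact hp (h a hw)
    simp [this]

lemma pi_atomic (n : ℕ) {w : ι → ℝ} (hw : ∀ a, 0 ≤ w a) (z : ι → β) :
    Measure.pi (fun _ : Fin n => atomicMeasure w z)
      = atomicMeasure (fun t : Fin n → ι => ∏ i, w (t i)) (fun t i => z (t i)) := by
  refine Measure.pi_eq fun s hs => ?_
  rw [atomic_apply]
  have key : ∀ t : Fin n → ι,
      ENNReal.ofReal (∏ i, w (t i)) * (Set.univ.pi s).indicator 1 (fun i => z (t i))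
        = ∏ i, (ENNReal.ofReal (w (t i)) * (s i).indicator 1 (z (t i))) := by
    intro t
    rw [ENNReal.ofReal_prod_of_nonneg (fun i _ => hw (t i)), Set.indicator_apply]
    by_cases hmem : (fun i => z (t i)) ∈ Set.univ.pi s
    · rw [if_pos hmem, Pi.one_apply, mul_one]
      refine Finset.prod_congr rfl fun i _ => ?_
      rw [Set.indicator_of_mem (hmem i (Set.mem_univ i)) 1, Pi.one_apply, mul_one]
    · rw [if_neg hmem, mul_zero]
      rw [Set.mem_univ_pi] at hmem
      push_neg at hmem
      obtain ⟨i, hi⟩ := hmem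
      rw [eq_comm]
      refine Finset.prod_eq_zero (Finset.mem_univ i) ?_
      rw [Set.indicator_of_notMem hi, mul_zero]
    
  simp only [key]
  rw [← Fintype.piFinset_univ, ← Finset.prod_univ_sum (fun _ => Finset.univ)
    (fun i a => ENNReal.ofReal (w a) * (s i).indicator 1 (z a))]
  exact Finset.prod_congr rfl fun i _ => (atomic_apply w z (s i)).symm

end Atomic

noncomputable section Construction
variable {α : Type*} [MeasurableSpace α] [MeasurableSingletonClass α]

def biR (b : Bool) : ℝ := if b then 1 else 0

def massC (V : ℕ) (p : ℝ) (j : Fin V) : ℝ :=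
  if (j : ℕ) < V - 1 then p else 1 - ((V : ℝ) - 1) * p

def etaVC (h : ℝ) {V : ℕ} (σ : Fin V → Bool) (j : Fin V) : ℝ :=
  if σ j then (1 + h) / 2 else (1 - h) / 2

def wmuC (V : ℕ) (p h e_m : ℝ) (σ : Fin V → Bool) : Fin V × Bool × Bool → ℝ := fun a =>
  massC V p a.1 * (if a.2.1 then (if a.2.2 then etaVC h σ a.1 * e_m
      else etaVC h σ a.1 * (1 - e_m))
    else (if a.2.2 then 0 else 1 - etaVC h σ a.1))

def wnuC (V : ℕ) (p h e_m : ℝ) (σ : Fin V → Bool) : Fin V × Bool → ℝ := fun b =>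
  massC V p b.1 * (if b.2 then e_m * etaVC h σ b.1 else 1 - e_m * etaVC h σ b.1)

def ptmuC {V : ℕ} (x : Fin V → α) : Fin V × Bool × Bool → α × ℝ × ℝ := fun a =>
  (x a.1, (biR a.2.1, biR a.2.2))

def ptnuC {V : ℕ} (x : Fin V → α) : Fin V × Bool → α × ℝ := fun b => (x b.1, biR b.2)

def etaF (h : ℝ) (g : α → ℝ) : α → ℝ := fun a => (1 - h) / 2 + h * g a

section Basic
variable {V : ℕ} {p h e_m : ℝ} {σ : Fin V → Bool}

lemma sum_ite_fin (hV : 1 ≤ V) (c d : ℝ) :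
    ∑ j : Fin V, (if (j : ℕ) < V - 1 then c else d) = ((V : ℝ) - 1) * c + d := by
  rw [Fin.sum_univ_eq_sum_range (fun k => if k < V - 1 then c else d) V]
  obtain ⟨W, rfl⟩ : ∃ W, V = W + 1 := ⟨V - 1, (Nat.succ_pred_eq_of_pos hV).symm⟩
  rw [Finset.sum_range_succ]
  simp only [Nat.add_sub_cancel]
  rw [Finset.sum_congr rfl (fun k hk => if_pos (Finset.mem_range.1 hk)),
    Finset.sum_const, Finset.card_range, if_neg (lt_irrefl W)]
  push_cast
  ring

lemma massC_nonneg (hp0 : 0 ≤ p) (hpV : ((V : ℝ) - 1) * p ≤ 1) (j : Fin V) :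
    0 ≤ massC V p j := by
  unfold massC; split <;> linarith

lemma sum_massC (hV : 1 ≤ V) : ∑ j : Fin V, massC V p j = 1 := by
  rw [show (∑ j : Fin V, massC V p j) = ∑ j : Fin V,
    (if (j : ℕ) < V - 1 then p else 1 - ((V : ℝ) - 1) * p) from rfl, sum_ite_fin hV]
  ring

lemma etaVC_mem (hh0 : 0 ≤ h) (hh1 : h ≤ 1) (j : Fin V) :
    0 ≤ etaVC h σ j ∧ etaVC h σ j ≤ 1 := by
  unfold etaVC; split <;> constructor <;> linarith

lemma wnuC_nonneg (hp0 : 0 ≤ p) (hpV : ((V : ℝ) - 1) * p ≤ 1)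
    (hh0 : 0 ≤ h) (hh1 : h ≤ 1) (hem0 : 0 ≤ e_m) (hem1 : e_m ≤ 1) (b : Fin V × Bool) :
    0 ≤ wnuC V p h e_m σ b := by
  obtain ⟨hη0, hη1⟩ := etaVC_mem (σ := σ) hh0 hh1 b.1
  have h1 : e_m * etaVC h σ b.1 ≤ 1 := by nlinarith
  have h0 : 0 ≤ e_m * etaVC h σ b.1 := by nlinarith
  unfold wnuC
  refine mul_nonneg (massC_nonneg hp0 hpV _) ?_
  split <;> linarith

lemma wmuC_nonneg (hp0 : 0 ≤ p) (hpV : ((V : ℝ) - 1) * p ≤ 1)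
    (hh0 : 0 ≤ h) (hh1 : h ≤ 1) (hem0 : 0 ≤ e_m) (hem1 : e_m ≤ 1) (a : Fin V × Bool × Bool) :
    0 ≤ wmuC V p h e_m σ a := by
  obtain ⟨hη0, hη1⟩ := etaVC_mem (σ := σ) hh0 hh1 a.1
  unfold wmuC
  refine mul_nonneg (massC_nonneg hp0 hpV _) ?_
  split
  · split <;> nlinarith
  · split
    · exact le_refl 0
    · linarith

lemma sum_wnuC_fiber (j : Fin V) :
    ∑ s : Bool, wnuC V p h e_m σ (j, s) = massC V p j := by
  rw [Fintype.sum_bool]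
  show massC V p j * (e_m * etaVC h σ j) + massC V p j * (1 - e_m * etaVC h σ j) = _
  ring

lemma sum_wnuC (hV : 1 ≤ V) : ∑ b : Fin V × Bool, wnuC V p h e_m σ b = 1 := by
  rw [Fintype.sum_prod_type]
  rw [Finset.sum_congr rfl fun j _ => sum_wnuC_fiber j]
  exact sum_massC hV

lemma sum_wmuC_fiber (j : Fin V) :
    ∑ ys : Bool × Bool, wmuC V p h e_m σ (j, ys) = massC V p j := by
  rw [Fintype.sum_prod_type, Fintype.sum_bool]
  rw [Fintype.sum_bool, Fintype.sum_bool]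
  show massC V p j * (etaVC h σ j * e_m) + massC V p j * (etaVC h σ j * (1 - e_m))
    + (massC V p j * 0 + massC V p j * (1 - etaVC h σ j)) = _
  ring

lemma sum_wmuC (hV : 1 ≤ V) : ∑ a : Fin V × Bool × Bool, wmuC V p h e_m σ a = 1 := by
  rw [Fintype.sum_prod_type]
  rw [Finset.sum_congr rfl fun j _ => sum_wmuC_fiber j]
  exact sum_massC hV

end Basic

section Admissible
variable {V : ℕ} {p h e_m : ℝ} {σ : Fin V → Bool} {x : Fin V → α} {g : α → ℝ}

/-- The adversarial joint distribution of `(X, Y, S)`. -/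
def muC (V : ℕ) (p h e_m : ℝ) (σ : Fin V → Bool) (x : Fin V → α) : Measure (α × ℝ × ℝ) :=
  atomicMeasure (wmuC V p h e_m σ) (ptmuC x)

lemma biR_cases (b : Bool) : biR b = 0 ∨ biR b = 1 := by cases b <;> simp [biR]

lemma etaF_x (hg01 : ∀ a, g a = 0 ∨ g a = 1) (hgx : ∀ i, g (x i) = biR (σ i)) (j : Fin V) :
    etaF h g (x j) = etaVC h σ j := by
  rw [etaF, hgx j, etaVC]
  cases hσ : σ j <;> simp [biR] <;> ring

variable (hV : 1 ≤ V) (hp0 : 0 ≤ p) (hpV : ((V : ℝ) - 1) * p ≤ 1)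
  (hh0 : 0 < h) (hh1 : h ≤ 1) (hem0 : 0 ≤ e_m) (hem1 : e_m ≤ 1)

include hp0 hpV hh0 hh1 hem0 hem1

lemma muC_prob (hV : 1 ≤ V) : IsProbabilityMeasure (muC V p h e_m σ x (α := α)) :=
  atomic_isProbability (wmuC_nonneg hp0 hpV hh0.le hh1 hem0 hem1) (sum_wmuC hV) _

lemma muC_coords : ∀ᵐ q ∂(muC V p h e_m σ x (α := α)),
    (q.2.1 = 0 ∨ q.2.1 = 1) ∧ (q.2.2 = 0 ∨ q.2.2 = 1) := by
  refine ae_atomic fun a _ => ?_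
  exact ⟨biR_cases a.2.1, biR_cases a.2.2⟩

omit hh0 in
lemma fiberY (hh0 : 0 ≤ h) (j : Fin V) :
    ∑ ys : Bool × Bool, wmuC V p h e_m σ (j, ys) * biR ys.1
      = massC V p j * etaVC h σ j := by
  rw [Fintype.sum_prod_type, Fintype.sum_bool, Fintype.sum_bool, Fintype.sum_bool]
  show massC V p j * (etaVC h σ j * e_m) * biR true
      + massC V p j * (etaVC h σ j * (1 - e_m)) * biR true
      + (massC V p j * 0 * biR false + massC V p j * (1 - etaVC h σ j) * biR false) = _
  simp [biR]; ring

omit hh0 in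
lemma fiberS (hh0 : 0 ≤ h) (j : Fin V) :
    ∑ ys : Bool × Bool, wmuC V p h e_m σ (j, ys) * biR ys.2
      = massC V p j * (etaVC h σ j * e_m) := by
  rw [Fintype.sum_prod_type, Fintype.sum_bool, Fintype.sum_bool, Fintype.sum_bool]
  show massC V p j * (etaVC h σ j * e_m) * biR true
      + massC V p j * (etaVC h σ j * (1 - e_m)) * biR false
      + (massC V p j * 0 * biR true + massC V p j * (1 - etaVC h σ j) * biR false) = _
  simp [biR]

lemma muC_regression (hg : Measurable g) (hg01 : ∀ a, g a = 0 ∨ g a = 1)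
    (hgx : ∀ i, g (x i) = biR (σ i)) :
    IsRegression (muC V p h e_m σ x (α := α)) (fun q => q.1) (fun q => q.2.1) (etaF h g) := by
  refine ⟨measurable_const.add (hg.const_mul h), fun a => ?_, fun A hA => ?_⟩
  · rcases hg01 a with h0 | h0 <;> rw [etaF, h0] <;> constructor <;> linarith
  · have hPre : MeasurableSet ((fun ω : α × ℝ × ℝ => ω.1) ⁻¹' A) := measurable_fst hA
    rw [muC, setIntegral_atomic (wmuC_nonneg hp0 hpV hh0.le hh1 hem0 hem1) _ _ hPre,
      setIntegral_atomic (wmuC_nonneg hp0 hpV hh0.le hh1 hem0 hem1) _ _ hPre]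
    rw [Fintype.sum_prod_type, Fintype.sum_prod_type]
    refine Finset.sum_congr rfl fun j _ => ?_
    have hmem : ∀ ys : Bool × Bool,
        (ptmuC x (j, ys) ∈ (fun ω : α × ℝ × ℝ => ω.1) ⁻¹' A) = (x j ∈ A) := fun ys => rfl
    by_cases hx : x j ∈ A
    · simp only [hmem, hx, if_true]
      have l1 : ∑ ys : Bool × Bool, wmuC V p h e_m σ (j, ys) * (ptmuC x (j, ys)).2.1
          = massC V p j * etaVC h σ j := fiberY hp0 hpV hh1 hem0 hem1 hh0.le j
      rw [l1]
      have l2 : ∀ ys : Bool × Bool, wmuC V p h e_m σ (j, ys) * etaF h g (ptmuC x (j, ys)).1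
          = wmuC V p h e_m σ (j, ys) * etaVC h σ j := fun ys => by
        rw [show (ptmuC x (j, ys)).1 = x j from rfl, etaF_x hg01 hgx]
      rw [Finset.sum_congr rfl fun ys _ => l2 ys, ← Finset.sum_mul, sum_wmuC_fiber]
    · simp only [hmem, hx, if_false]

lemma muC_propensity (hg : Measurable g) (hg01 : ∀ a, g a = 0 ∨ g a = 1)
    (hgx : ∀ i, g (x i) = biR (σ i)) :
    IsPropensity (muC V p h e_m σ x (α := α)) (fun q => q.1) (fun q => q.2.1)
      (fun q => q.2.2) (fun _ => e_m) := by
  refine ⟨measurable_const, fun _ => ⟨hem0, hem1⟩, ?_, fun A hA => ?_⟩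
  · refine ae_atomic fun a hw => ?_
    rcases a with ⟨j, y, s⟩
    cases y <;> cases s <;> simp [ptmuC, biR]
    exact absurd (by simp [wmuC]) hw
  · have hPre : MeasurableSet ((fun ω : α × ℝ × ℝ => ω.1) ⁻¹' A) := measurable_fst hA
    rw [muC, setIntegral_atomic (wmuC_nonneg hp0 hpV hh0.le hh1 hem0 hem1) _ _ hPre,
      setIntegral_atomic (wmuC_nonneg hp0 hpV hh0.le hh1 hem0 hem1) _ _ hPre]
    rw [Fintype.sum_prod_type, Fintype.sum_prod_type]
    refine Finset.sum_congr rfl fun j _ => ?_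
    by_cases hx : x j ∈ A
    · simp only [show ∀ ys : Bool × Bool,
        (ptmuC x (j, ys) ∈ (fun ω : α × ℝ × ℝ => ω.1) ⁻¹' A) = (x j ∈ A) from fun _ => rfl,
        hx, if_true]
      have l1 : ∑ ys : Bool × Bool, wmuC V p h e_m σ (j, ys) * (ptmuC x (j, ys)).2.2
          = massC V p j * (etaVC h σ j * e_m) := fiberS hp0 hpV hh1 hem0 hem1 hh0.le j
      rw [l1]
      have l2 : ∀ ys : Bool × Bool, wmuC V p h e_m σ (j, ys)
            * ((fun _ : α => e_m) (ptmuC x (j, ys)).1 * (ptmuC x (j, ys)).2.1)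
          = e_m * (wmuC V p h e_m σ (j, ys) * biR ys.1) := fun ys => by
        show wmuC V p h e_m σ (j, ys) * (e_m * biR ys.1) = _; ring
      rw [Finset.sum_congr rfl fun ys _ => l2 ys, ← Finset.mul_sum,
        fiberY hp0 hpV hh1 hem0 hem1 hh0.le j]
      ring
    · simp only [show ∀ ys : Bool × Bool,
        (ptmuC x (j, ys) ∈ (fun ω : α × ℝ × ℝ => ω.1) ⁻¹' A) = (x j ∈ A) from fun _ => rfl,
        hx, if_false]

omit hp0 hpV hem0 hem1 in
lemma bayes_etaF (hg01 : ∀ a, g a = 0 ∨ g a = 1) : bayes (etaF h g) = g := by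
  funext a
  rcases hg01 a with h0 | h0 <;> rw [bayes, etaF, h0]
  · rw [mul_zero, if_neg (by linarith)]
  · rw [mul_one, if_pos (by linarith)]

omit hp0 hpV hem0 hem1 in
lemma margin_etaF (hg01 : ∀ a, g a = 0 ∨ g a = 1) (a : α) : h ≤ |2 * etaF h g a - 1| := by
  rcases hg01 a with h0 | h0 <;> rw [etaF, h0]
  · rw [show 2 * ((1 - h) / 2 + h * 0) - 1 = -h by ring, abs_neg, abs_of_pos hh0]
  · rw [show 2 * ((1 - h) / 2 + h * 1) - 1 = h by ring, abs_of_pos hh0]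

end Admissible
end Construction

section RiskFormula
variable {α : Type*} [MeasurableSpace α] [MeasurableSingletonClass α]
variable {V : ℕ} {p h e_m : ℝ} {σ : Fin V → Bool} {x : Fin V → α} {g : α → ℝ}
variable (hp0 : 0 ≤ p) (hpV : ((V : ℝ) - 1) * p ≤ 1)
  (hh0 : 0 < h) (hh1 : h ≤ 1) (hem0 : 0 ≤ e_m) (hem1 : e_m ≤ 1)

include hp0 hpV hh0 hh1 hem0 hem1

lemma risk_muC (gg : α → ℝ) :
    risk (muC V p h e_m σ x) (fun q => q.1) (fun q => q.2.1) gg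
      = ∑ a : Fin V × Bool × Bool,
          if gg (x a.1) ≠ biR a.2.1 then wmuC V p h e_m σ a else 0 := by
  rw [risk, muC, atomic_apply_toReal (wmuC_nonneg hp0 hpV hh0.le hh1 hem0 hem1)]
  refine Finset.sum_congr rfl fun a _ => ?_
  by_cases hc : gg (x a.1) ≠ biR a.2.1
  · rw [if_pos hc, if_pos (show ptmuC x a ∈ {ω : α × ℝ × ℝ | gg ω.1 ≠ ω.2.1} from hc)]
  · rw [if_neg hc, if_neg (show ptmuC x a ∉ {ω : α × ℝ × ℝ | gg ω.1 ≠ ω.2.1} from hc)]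

lemma riskFiber (gg : α → ℝ) (j : Fin V) :
    (∑ ys : Bool × Bool, if gg (x j) ≠ biR ys.1 then wmuC V p h e_m σ (j, ys) else 0)
      = massC V p j * (etaVC h σ j * (if gg (x j) ≠ 1 then 1 else 0)
          + (1 - etaVC h σ j) * (if gg (x j) ≠ 0 then 1 else 0)) := by
  rw [Fintype.sum_prod_type, Fintype.sum_bool, Fintype.sum_bool, Fintype.sum_bool]
  show (if gg (x j) ≠ biR true then massC V p j * (etaVC h σ j * e_m) else 0)
      + (if gg (x j) ≠ biR true then massC V p j * (etaVC h σ j * (1 - e_m)) else 0)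
      + ((if gg (x j) ≠ biR false then massC V p j * 0 else 0)
        + (if gg (x j) ≠ biR false then massC V p j * (1 - etaVC h σ j) else 0)) = _
  by_cases h1 : gg (x j) ≠ 1 <;> by_cases h0 : gg (x j) ≠ 0 <;>
    simp only [h1, h0, biR, if_true, if_false, ite_true, ite_false, if_neg, not_true,
      not_false_iff] <;> simp [h1, h0] <;> ring

lemma excess_muC (hg01 : ∀ a, g a = 0 ∨ g a = 1)
    (hgx : ∀ i, g (x i) = biR (σ i)) {gg : α → ℝ} (hgg01 : ∀ a, gg a = 0 ∨ gg a = 1) :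
    excessRisk (muC V p h e_m σ x) (fun q => q.1) (fun q => q.2.1) (etaF h g) gg
      = ∑ j : Fin V, massC V p j
          * (h * (if gg (x j) ≠ biR (σ j) then 1 else 0)) := by
  rw [excessRisk, bayes_etaF hh0 hh1 hg01,
    risk_muC hp0 hpV hh0 hh1 hem0 hem1 gg, risk_muC hp0 hpV hh0 hh1 hem0 hem1 g,
    Fintype.sum_prod_type, Fintype.sum_prod_type, ← Finset.sum_sub_distrib]
  refine Finset.sum_congr rfl fun j _ => ?_
  rw [riskFiber hp0 hpV hh0 hh1 hem0 hem1 gg j, riskFiber hp0 hpV hh0 hh1 hem0 hem1 g j,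
    hgx j]
  rcases hgg01 (x j) with hgj | hgj <;> cases hσ : σ j <;>
    rw [hgj] <;> simp only [etaVC, hσ, if_true, if_false, biR] <;> norm_num <;> ring

lemma excess_muC_nonneg (hg01 : ∀ a, g a = 0 ∨ g a = 1)
    (hgx : ∀ i, g (x i) = biR (σ i)) {gg : α → ℝ} (hgg01 : ∀ a, gg a = 0 ∨ gg a = 1) :
    0 ≤ excessRisk (muC V p h e_m σ x) (fun q => q.1) (fun q => q.2.1) (etaF h g) gg := by
  rw [excess_muC hp0 hpV hh0 hh1 hem0 hem1 hg01 hgx hgg01]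
  refine Finset.sum_nonneg fun j _ => ?_
  refine mul_nonneg (massC_nonneg hp0 hpV j) (mul_nonneg hh0.le ?_)
  split <;> norm_num

omit hp0 hpV hh0 hh1 hem0 hem1 in
lemma wmu_add (j : Fin V) (s : Bool) :
    wmuC V p h e_m σ (j, true, s) + wmuC V p h e_m σ (j, false, s)
      = wnuC V p h e_m σ (j, s) := by
  cases s
  · show massC V p j * (etaVC h σ j * (1 - e_m)) + massC V p j * (1 - etaVC h σ j)
      = massC V p j * (1 - e_m * etaVC h σ j)
    ring
  · show massC V p j * (etaVC h σ j * e_m) + massC V p j * 0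
      = massC V p j * (e_m * etaVC h σ j)
    ring

lemma map_muC :
    (muC V p h e_m σ x).map (fun q : α × ℝ × ℝ => (q.1, q.2.2))
      = atomicMeasure (wnuC V p h e_m σ) (ptnuC x) := by
  rw [muC, map_atomic _ _ (measurable_fst.prodMk measurable_snd.snd :
    Measurable fun q : α × ℝ × ℝ => (q.1, q.2.2))]
  rw [atomicMeasure, atomicMeasure, Fintype.sum_prod_type, Fintype.sum_prod_type]
  refine Finset.sum_congr rfl fun j _ => ?_
  rw [Fintype.sum_prod_type, Finset.sum_comm]
  refine Finset.sum_congr rfl fun s _ => ?_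
  rw [Fintype.sum_bool]
  have hnn := wmuC_nonneg (σ := σ) hp0 hpV hh0.le hh1 hem0 hem1
  show ENNReal.ofReal (wmuC V p h e_m σ (j, true, s)) • Measure.dirac ((x j, biR s) : α × ℝ)
      + ENNReal.ofReal (wmuC V p h e_m σ (j, false, s)) • Measure.dirac ((x j, biR s) : α × ℝ)
    = ENNReal.ofReal (wnuC V p h e_m σ (j, s)) • Measure.dirac ((x j, biR s) : α × ℝ)
  rw [← add_smul, ← ENNReal.ofReal_add (hnn (j, true, s)) (hnn (j, false, s)), wmu_add]

end RiskFormula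

section Hellinger
variable {ι : Type*} [Fintype ι]

lemma sqrt_prod' (s : Finset ι) (f : ι → ℝ) (hf : ∀ i ∈ s, 0 ≤ f i) :
    Real.sqrt (∏ i ∈ s, f i) = ∏ i ∈ s, Real.sqrt (f i) := by
  classical
  induction s using Finset.induction with
  | empty => simp
  | @insert a s ha ih =>
    rw [Finset.prod_insert ha, Finset.prod_insert ha,
      Real.sqrt_mul (hf a (Finset.mem_insert_self a s)),
      ih fun i hi => hf i (Finset.mem_insert_of_mem hi)]

lemma affinity_le_one {u v : ι → ℝ} (hu : ∀ i, 0 ≤ u i) (hv : ∀ i, 0 ≤ v i)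
    (hu1 : ∑ i, u i = 1) (hv1 : ∑ i, v i = 1) :
    ∑ i, Real.sqrt (u i * v i) ≤ 1 := by
  have key : (∑ i, Real.sqrt (u i * v i)) ^ 2 ≤ 1 := by
    calc (∑ i, Real.sqrt (u i * v i)) ^ 2
        = (∑ i, Real.sqrt (u i) * Real.sqrt (v i)) ^ 2 := by
          rw [Finset.sum_congr rfl fun i _ => Real.sqrt_mul (hu i) (v i)]
      _ ≤ (∑ i, Real.sqrt (u i) ^ 2) * (∑ i, Real.sqrt (v i) ^ 2) :=
          Finset.sum_mul_sq_le_sq_mul_sq _ _ _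
      _ = 1 := by
          rw [Finset.sum_congr rfl fun i _ => Real.sq_sqrt (hu i),
            Finset.sum_congr rfl fun i _ => Real.sq_sqrt (hv i), hu1, hv1, one_mul]
  nlinarith [Finset.sum_nonneg (fun i (_ : i ∈ Finset.univ) =>
    Real.sqrt_nonneg (u i * v i))]

/-- The key total-variation bound via Hellinger affinity. -/
lemma min_sum_ge {u v : ι → ℝ} (hu : ∀ i, 0 ≤ u i) (hv : ∀ i, 0 ≤ v i)
    (hu1 : ∑ i, u i = 1) (hv1 : ∑ i, v i = 1) :
    1 - Real.sqrt (2 * (1 - ∑ i, Real.sqrt (u i * v i)))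
      ≤ ∑ i, min (u i) (v i) := by
  set ρ := ∑ i, Real.sqrt (u i * v i) with hρ
  have hρ0 : 0 ≤ ρ := Finset.sum_nonneg fun i _ => Real.sqrt_nonneg _
  have hρ1 : ρ ≤ 1 := affinity_le_one hu hv hu1 hv1
  have hsq : ∀ i, Real.sqrt (u i * v i) = Real.sqrt (u i) * Real.sqrt (v i) :=
    fun i => Real.sqrt_mul (hu i) (v i)
  -- Σ |u - v| ≤ √((2-2ρ)(2+2ρ))
  have habs : ∑ i, |u i - v i| ≤ Real.sqrt ((2 - 2 * ρ) * (2 + 2 * ρ)) := by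
    have cs : (∑ i, |Real.sqrt (u i) - Real.sqrt (v i)| * (Real.sqrt (u i) + Real.sqrt (v i))) ^ 2
        ≤ (∑ i, |Real.sqrt (u i) - Real.sqrt (v i)| ^ 2)
          * (∑ i, (Real.sqrt (u i) + Real.sqrt (v i)) ^ 2) :=
      Finset.sum_mul_sq_le_sq_mul_sq _ _ _
    have e1 : ∀ i, |u i - v i| = |Real.sqrt (u i) - Real.sqrt (v i)|
        * (Real.sqrt (u i) + Real.sqrt (v i)) := by
      intro i
      have h1 := Real.sq_sqrt (hu i)
      have h2 := Real.sq_sqrt (hv i)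
      have h3 : u i - v i = (Real.sqrt (u i) - Real.sqrt (v i))
          * (Real.sqrt (u i) + Real.sqrt (v i)) := by nlinarith
      rw [h3, abs_mul,
        abs_of_nonneg (show (0:ℝ) ≤ Real.sqrt (u i) + Real.sqrt (v i) by positivity)]
    have e2 : ∑ i, |Real.sqrt (u i) - Real.sqrt (v i)| ^ 2 = 2 - 2 * ρ := by
      rw [Finset.sum_congr rfl fun i _ => sq_abs _]
      have : ∀ i, (Real.sqrt (u i) - Real.sqrt (v i)) ^ 2
          = u i + v i - 2 * Real.sqrt (u i * v i) := by
        intro i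
        have h1 := Real.sq_sqrt (hu i)
        have h2 := Real.sq_sqrt (hv i)
        rw [hsq i]; nlinarith
      rw [Finset.sum_congr rfl fun i _ => this i]
      rw [Finset.sum_sub_distrib, Finset.sum_add_distrib, hu1, hv1, ← Finset.mul_sum, ← hρ]
      ring
    have e3 : ∑ i, (Real.sqrt (u i) + Real.sqrt (v i)) ^ 2 = 2 + 2 * ρ := by
      have : ∀ i, (Real.sqrt (u i) + Real.sqrt (v i)) ^ 2
          = u i + v i + 2 * Real.sqrt (u i * v i) := by
        intro i
        have h1 := Real.sq_sqrt (hu i)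
        have h2 := Real.sq_sqrt (hv i)
        rw [hsq i]; nlinarith
      rw [Finset.sum_congr rfl fun i _ => this i]
      rw [Finset.sum_add_distrib, Finset.sum_add_distrib, hu1, hv1, ← Finset.mul_sum, ← hρ]
      ring
    rw [Finset.sum_congr rfl fun i _ => e1 i]
    rw [e2, e3] at cs
    have hnn : 0 ≤ ∑ i, |Real.sqrt (u i) - Real.sqrt (v i)|
        * (Real.sqrt (u i) + Real.sqrt (v i)) :=
      Finset.sum_nonneg fun i _ => mul_nonneg (abs_nonneg _) (by positivity)
    calc ∑ i, |Real.sqrt (u i) - Real.sqrt (v i)| * (Real.sqrt (u i) + Real.sqrt (v i))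
        = Real.sqrt ((∑ i, |Real.sqrt (u i) - Real.sqrt (v i)|
            * (Real.sqrt (u i) + Real.sqrt (v i))) ^ 2) := (Real.sqrt_sq hnn).symm
      _ ≤ Real.sqrt ((2 - 2 * ρ) * (2 + 2 * ρ)) := Real.sqrt_le_sqrt cs
  -- √((2-2ρ)(2+2ρ)) ≤ 2√(2(1-ρ))
  have habs2 : Real.sqrt ((2 - 2 * ρ) * (2 + 2 * ρ)) ≤ 2 * Real.sqrt (2 * (1 - ρ)) := by
    have h4 : Real.sqrt (4 * (2 * (1 - ρ))) = 2 * Real.sqrt (2 * (1 - ρ)) := by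
      rw [Real.sqrt_mul (by norm_num : (0:ℝ) ≤ 4),
        show Real.sqrt 4 = 2 by
          rw [show (4 : ℝ) = 2 ^ 2 by norm_num, Real.sqrt_sq (by norm_num : (0:ℝ) ≤ 2)]]
    rw [← h4]
    exact Real.sqrt_le_sqrt (by nlinarith)
  -- min = (u + v - |u-v|)/2
  have hmin : ∀ i, min (u i) (v i) = (u i + v i - |u i - v i|) / 2 := by
    intro i
    rcases le_total (u i) (v i) with hle | hle
    · rw [min_eq_left hle, abs_of_nonpos (by linarith)]; ring
    · rw [min_eq_right hle, abs_of_nonneg (by linarith)]; ring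
  rw [Finset.sum_congr rfl fun i _ => hmin i]
  have expand : ∑ i, (u i + v i - |u i - v i|) / 2
      = 1 - (∑ i, |u i - v i|) / 2 := by
    rw [← Finset.sum_div, Finset.sum_sub_distrib, Finset.sum_add_distrib, hu1, hv1]
    ring
  rw [expand]
  have := habs.trans habs2
  linarith

/-- Bernoulli-type power bound: `1 - r ^ n ≤ n * (1 - r)` for `r ∈ [0, 1]`. -/
lemma one_sub_pow_le_n (r : ℝ) (hr0 : 0 ≤ r) (hr1 : r ≤ 1) (n : ℕ) :
    1 - r ^ n ≤ n * (1 - r) := by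
  have := one_add_mul_le_pow (a := r - 1) (by linarith) n
  have : 1 + (n : ℝ) * (r - 1) ≤ r ^ n := by
    simpa [add_sub_cancel] using this
  nlinarith

end Hellinger

section Coordinate

/-- Hellinger-affinity lower bound for the two Bernoulli observation laws. -/
lemma bern_affinity {h e_m : ℝ} (hh0 : 0 < h) (hh1 : h ≤ 1) (hem0 : 0 ≤ e_m) (hem1 : e_m ≤ 1) :
    1 - e_m * h ^ 2 ≤ Real.sqrt ((e_m * ((1+h)/2)) * (e_m * ((1-h)/2)))
      + Real.sqrt ((1 - e_m * ((1+h)/2)) * (1 - e_m * ((1-h)/2))) := by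
  obtain ⟨a, ha_def⟩ : ∃ a, e_m * ((1+h)/2) = a := ⟨_, rfl⟩
  obtain ⟨b, hb_def⟩ : ∃ b, e_m * ((1-h)/2) = b := ⟨_, rfl⟩
  rw [ha_def, hb_def]
  have ha0 : 0 ≤ a := by rw [← ha_def]; positivity
  have hb0 : 0 ≤ b := by rw [← hb_def]; nlinarith
  have ha1 : a ≤ 1 := by rw [← ha_def]; nlinarith
  have hb1 : b ≤ 1 := by rw [← hb_def]; nlinarith
  have habe : a + b = e_m := by rw [← ha_def, ← hb_def]; ring
  have hbae : b - a = -(e_m * h) := by rw [← ha_def, ← hb_def]; ring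
  obtain ⟨q, hq_def⟩ : ∃ q, Real.sqrt (1 - h ^ 2) = q := ⟨_, rfl⟩
  have hq0 : 0 ≤ q := hq_def ▸ Real.sqrt_nonneg _
  have hq2 : q ^ 2 = 1 - h ^ 2 := by rw [← hq_def]; exact Real.sq_sqrt (by nlinarith)
  have hq1 : 1 - h ^ 2 ≤ q := by nlinarith [hq2, hq0, sq_nonneg (q - (1 - h ^ 2))]
  have hab : a * b = (e_m * q / 2) ^ 2 := by
    rw [← ha_def, ← hb_def]; linear_combination (-(e_m ^ 2 / 4)) * hq2
  have hsab : Real.sqrt (a * b) = e_m * q / 2 := by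
    rw [hab, Real.sqrt_sq (by positivity)]
  obtain ⟨t1, ht1_def⟩ : ∃ t1, Real.sqrt (1 - a) = t1 := ⟨_, rfl⟩
  obtain ⟨t2, ht2_def⟩ : ∃ t2, Real.sqrt (1 - b) = t2 := ⟨_, rfl⟩
  have ht1 : t1 ^ 2 = 1 - a := by rw [← ht1_def]; exact Real.sq_sqrt (by linarith)
  have ht2 : t2 ^ 2 = 1 - b := by rw [← ht2_def]; exact Real.sq_sqrt (by linarith)
  have ht10 : 0 ≤ t1 := ht1_def ▸ Real.sqrt_nonneg _
  have ht20 : 0 ≤ t2 := ht2_def ▸ Real.sqrt_nonneg _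
  have hst : Real.sqrt ((1 - a) * (1 - b)) = t1 * t2 := by
    rw [Real.sqrt_mul (by linarith), ht1_def, ht2_def]
  have h5 : (t1 - t2) * (t1 + t2) = b - a := by linear_combination ht1 - ht2
  have hd : 1 ≤ (t1 + t2) ^ 2 := by nlinarith [mul_nonneg ht10 ht20]
  have h6 : (t1 - t2) ^ 2 * (t1 + t2) ^ 2 = (e_m * h) ^ 2 := by
    rw [← mul_pow, h5, hbae]; ring
  have key2 : (t1 - t2) ^ 2 ≤ (e_m * h) ^ 2 := by
    calc (t1 - t2) ^ 2 = (t1 - t2) ^ 2 * 1 := (mul_one _).symm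
      _ ≤ (t1 - t2) ^ 2 * (t1 + t2) ^ 2 := mul_le_mul_of_nonneg_left hd (sq_nonneg _)
      _ = (e_m * h) ^ 2 := h6
  have hexpand : (t1 - t2) ^ 2 = t1 ^ 2 + t2 ^ 2 - 2 * (t1 * t2) := by ring
  have ht1t2 : (2 - e_m - (e_m * h) ^ 2) / 2 ≤ t1 * t2 := by
    rw [hexpand, ht1, ht2] at key2; linarith
  rw [hsab, hst]
  have hid : (e_m * h) ^ 2 = e_m ^ 2 * h ^ 2 := by ring
  rw [hid] at ht1t2
  have he2 : e_m ^ 2 * h ^ 2 ≤ e_m * h ^ 2 := by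
    have h1 : 0 ≤ e_m * (1 - e_m) := mul_nonneg hem0 (by linarith)
    have h2 : 0 ≤ e_m * (1 - e_m) * h ^ 2 := mul_nonneg h1 (sq_nonneg h)
    nlinarith [h2]
  have hqe : e_m * (1 - h ^ 2) ≤ e_m * q := mul_le_mul_of_nonneg_left hq1 hem0
  have hqe' : e_m - e_m * h ^ 2 ≤ e_m * q := by
    have : e_m * (1 - h ^ 2) = e_m - e_m * h ^ 2 := by ring
    linarith [hqe]
  linarith [ht1t2, he2, hqe']

/-- Per-coordinate affinity bound between the observation laws of `σ` and its flip at `j`. -/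
lemma affinity_coord {V : ℕ} {p h e_m : ℝ} (σ : Fin V → Bool) {j : Fin V}
    (hj : (j : ℕ) < V - 1) (hV : 1 ≤ V) (hp0 : 0 ≤ p) (hpV : ((V : ℝ) - 1) * p ≤ 1)
    (hh0 : 0 < h) (hh1 : h ≤ 1) (hem0 : 0 ≤ e_m) (hem1 : e_m ≤ 1) :
    1 - p * (e_m * h ^ 2) ≤ ∑ b : Fin V × Bool,
      Real.sqrt (wnuC V p h e_m σ b
        * wnuC V p h e_m (Function.update σ j (!σ j)) b) := by
  classical
  set σ' := Function.update σ j (!σ j) with hσ'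
  have hσj : σ' j = !σ j := Function.update_self j (!σ j) σ
  have hσk : ∀ k, k ≠ j → σ' k = σ k := fun k hk => Function.update_of_ne hk _ σ
  rw [Fintype.sum_prod_type]
  rw [← Finset.add_sum_erase Finset.univ _ (Finset.mem_univ j)]
  -- off-j terms
  have hoff : ∑ k ∈ Finset.univ.erase j, (∑ s : Bool,
      Real.sqrt (wnuC V p h e_m σ (k, s) * wnuC V p h e_m σ' (k, s)))
      = ∑ k ∈ Finset.univ.erase j, massC V p k := by
    refine Finset.sum_congr rfl fun k hk => ?_
    have hkj : k ≠ j := Finset.ne_of_mem_erase hk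
    have : ∀ s, wnuC V p h e_m σ' (k, s) = wnuC V p h e_m σ (k, s) := by
      intro s; rw [wnuC, wnuC]
      rw [show etaVC h σ' k = etaVC h σ k by rw [etaVC, etaVC, hσk k hkj]]
    rw [Finset.sum_congr rfl fun s _ => by
      rw [this s, Real.sqrt_mul_self (wnuC_nonneg hp0 hpV hh0.le hh1 hem0 hem1 (k, s))]]
    exact sum_wnuC_fiber k
  rw [hoff]
  have hmasssum : ∑ k ∈ Finset.univ.erase j, massC V p k = 1 - p := by
    have := sum_massC (V := V) (p := p) hV
    rw [← Finset.add_sum_erase Finset.univ _ (Finset.mem_univ j)] at this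
    have hmj : massC V p j = p := if_pos hj
    linarith
  rw [hmasssum]
  -- the j term
  have hmj : massC V p j = p := if_pos hj
  have hprod_t : etaVC h σ j * etaVC h σ' j = ((1+h)/2) * ((1-h)/2) := by
    rw [etaVC, etaVC, hσj]
    cases hc : σ j <;> simp [hc] <;> ring
  have hsum_t : etaVC h σ j + etaVC h σ' j = 1 := by
    rw [etaVC, etaVC, hσj]
    cases hc : σ j <;> simp [hc] <;> ring
  have hterm1 : wnuC V p h e_m σ (j, true) * wnuC V p h e_m σ' (j, true)
      = (p * (e_m * ((1+h)/2))) * (p * (e_m * ((1-h)/2))) := by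
    show (massC V p j * (e_m * etaVC h σ j)) * (massC V p j * (e_m * etaVC h σ' j)) = _
    rw [hmj]; linear_combination (p ^ 2 * e_m ^ 2) * hprod_t
  have hterm0 : wnuC V p h e_m σ (j, false) * wnuC V p h e_m σ' (j, false)
      = (p * (1 - e_m * ((1+h)/2))) * (p * (1 - e_m * ((1-h)/2))) := by
    show (massC V p j * (1 - e_m * etaVC h σ j)) * (massC V p j * (1 - e_m * etaVC h σ' j)) = _
    rw [hmj]; linear_combination (p ^ 2 * e_m ^ 2) * hprod_t - (p ^ 2 * e_m) * hsum_t
  rw [Fintype.sum_bool, hterm1, hterm0]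
  have e1 : Real.sqrt ((p * (e_m * ((1+h)/2))) * (p * (e_m * ((1-h)/2))))
      = p * Real.sqrt ((e_m * ((1+h)/2)) * (e_m * ((1-h)/2))) := by
    rw [show (p * (e_m * ((1+h)/2))) * (p * (e_m * ((1-h)/2)))
        = p ^ 2 * ((e_m * ((1+h)/2)) * (e_m * ((1-h)/2))) by ring,
      Real.sqrt_mul (sq_nonneg p), Real.sqrt_sq hp0]
  have e0 : Real.sqrt ((p * (1 - e_m * ((1+h)/2))) * (p * (1 - e_m * ((1-h)/2))))
      = p * Real.sqrt ((1 - e_m * ((1+h)/2)) * (1 - e_m * ((1-h)/2))) := by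
    rw [show (p * (1 - e_m * ((1+h)/2))) * (p * (1 - e_m * ((1-h)/2)))
        = p ^ 2 * ((1 - e_m * ((1+h)/2)) * (1 - e_m * ((1-h)/2))) by ring,
      Real.sqrt_mul (sq_nonneg p), Real.sqrt_sq hp0]
  rw [e1, e0]
  have := bern_affinity hh0 hh1 hem0 hem1
  nlinarith [this, hp0]

end Coordinate

section Core

/-- The Assouad-type averaging argument, in purely finite/real form. -/
lemma assouad_core {V n : ℕ} {p h e_m : ℝ} (hV : 2 ≤ V) (hp0 : 0 < p)
    (hpV : ((V : ℝ) - 1) * p ≤ 1) (hh0 : 0 < h) (hh1 : h ≤ 1)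
    (hem0 : 0 < e_m) (hem1 : e_m ≤ 1)
    (χ : (Fin n → Fin V × Bool) → Fin V → Bool) :
    ∃ σ : Fin V → Bool,
      p * h / 4 * ((V : ℝ) - 1) * (1 - Real.sqrt (2 * p * e_m * h ^ 2 * (n : ℝ)))
        ≤ ∑ t : Fin n → Fin V × Bool, (∏ i, wnuC V p h e_m σ (t i))
            * (∑ j, massC V p j * (h * (if χ t j ≠ σ j then (1 : ℝ) else 0))) := by
  classical
  have hV1 : 1 ≤ V := by omega
  have hVR : (1 : ℝ) ≤ (V : ℝ) - 1 := by
    have : (2 : ℝ) ≤ (V : ℝ) := by exact_mod_cast hV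
    linarith
  set sq := Real.sqrt (2 * p * e_m * h ^ 2 * (n : ℝ)) with hsq_def
  have hsq0 : 0 ≤ sq := Real.sqrt_nonneg _
  set D := 1 - sq with hD_def
  have hw : ∀ (σ : Fin V → Bool) b, 0 ≤ wnuC V p h e_m σ b :=
    fun σ => wnuC_nonneg hp0.le hpV hh0.le hh1 hem0.le hem1
  have hwsum : ∀ σ : Fin V → Bool, ∑ b : Fin V × Bool, wnuC V p h e_m σ b = 1 :=
    fun σ => sum_wnuC hV1
  set W : (Fin V → Bool) → (Fin n → Fin V × Bool) → ℝ :=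
    fun σ t => ∏ i, wnuC V p h e_m σ (t i) with hW_def
  have hWnn : ∀ σ t, 0 ≤ W σ t := fun σ t => Finset.prod_nonneg fun i _ => hw σ _
  have hWsum : ∀ σ, ∑ t : Fin n → Fin V × Bool, W σ t = 1 := by
    intro σ
    have e1 := Finset.prod_univ_sum (fun _ : Fin n => (Finset.univ : Finset (Fin V × Bool)))
      (fun _ b => wnuC V p h e_m σ b)
    rw [Fintype.piFinset_univ] at e1
    rw [hW_def, ← e1, Finset.prod_congr rfl fun i _ => hwsum σ, Finset.prod_const_one]
  set ind : (Fin V → Bool) → (Fin n → Fin V × Bool) → Fin V → ℝ :=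
    fun σ t j => if χ t j ≠ σ j then (1 : ℝ) else 0 with hind_def
  have hind01 : ∀ σ t j, 0 ≤ ind σ t j ∧ ind σ t j ≤ 1 := by
    intro σ t j; rw [hind_def]; dsimp only; split <;> norm_num
  set Ftil : Fin V → (Fin V → Bool) → ℝ :=
    fun j σ => ∑ t : Fin n → Fin V × Bool, W σ t * ind σ t j with hFtil_def
  have hFtilnn : ∀ j σ, 0 ≤ Ftil j σ :=
    fun j σ => Finset.sum_nonneg fun t _ => mul_nonneg (hWnn σ t) (hind01 σ t j).1
  -- the paired lower bound
  have pair : ∀ (j : Fin V), (j : ℕ) < V - 1 → ∀ σ : Fin V → Bool,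
      D ≤ Ftil j σ + Ftil j (Function.update σ j (!σ j)) := by
    intro j hj σ
    set σ' := Function.update σ j (!σ j) with hσ'_def
    have hσ'j : σ' j = !σ j := Function.update_self j (!σ j) σ
    -- affinity between the two product weights
    set r := ∑ b : Fin V × Bool,
      Real.sqrt (wnuC V p h e_m σ b * wnuC V p h e_m σ' b) with hr_def
    have hr0 : 0 ≤ r := Finset.sum_nonneg fun b _ => Real.sqrt_nonneg _
    have hr1 : r ≤ 1 := affinity_le_one (hw σ) (hw σ') (hwsum σ) (hwsum σ')
    have hrlow : 1 - p * (e_m * h ^ 2) ≤ r :=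
      affinity_coord σ hj hV1 hp0.le hpV hh0 hh1 hem0.le hem1
    have hρ : ∑ t : Fin n → Fin V × Bool, Real.sqrt (W σ t * W σ' t) = r ^ n := by
      have e1 : ∀ t : Fin n → Fin V × Bool, Real.sqrt (W σ t * W σ' t)
          = ∏ i, Real.sqrt (wnuC V p h e_m σ (t i) * wnuC V p h e_m σ' (t i)) := by
        intro t
        rw [hW_def]
        dsimp only
        rw [← Finset.prod_mul_distrib]
        exact sqrt_prod' _ _ fun i _ => mul_nonneg (hw σ _) (hw σ' _)
      rw [Finset.sum_congr rfl fun t _ => e1 t]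
      have e2 := Finset.prod_univ_sum (fun _ : Fin n => (Finset.univ : Finset (Fin V × Bool)))
        (fun _ b => Real.sqrt (wnuC V p h e_m σ b * wnuC V p h e_m σ' b))
      rw [Fintype.piFinset_univ] at e2
      rw [← e2, ← hr_def, Finset.prod_const, Finset.card_univ, Fintype.card_fin]
    -- TV bound
    have hmin := min_sum_ge (hWnn σ) (hWnn σ') (hWsum σ) (hWsum σ')
    rw [hρ] at hmin
    have hsqle : Real.sqrt (2 * (1 - r ^ n)) ≤ sq := by
      rw [hsq_def]
      refine Real.sqrt_le_sqrt ?_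
      have hpow := one_sub_pow_le_n r hr0 hr1 n
      have hn0 : (0 : ℝ) ≤ (n : ℝ) := Nat.cast_nonneg n
      have h1r : 1 - r ≤ p * (e_m * h ^ 2) := by linarith
      have := mul_le_mul_of_nonneg_left h1r hn0
      nlinarith
    -- paired indicators
    have hpaired : ∑ t : Fin n → Fin V × Bool, min (W σ t) (W σ' t)
        ≤ Ftil j σ + Ftil j σ' := by
      rw [hFtil_def]
      dsimp only
      rw [← Finset.sum_add_distrib]
      refine Finset.sum_le_sum fun t _ => ?_
      by_cases c1 : χ t j = σ j
      · have c2 : χ t j ≠ σ' j := by rw [hσ'j, c1]; cases σ j <;> simp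
        have e1 : ind σ t j = 0 := by rw [hind_def]; simp [c1]
        have e2 : ind σ' t j = 1 := by rw [hind_def]; simp [c2]
        rw [e1, e2, mul_zero, mul_one, zero_add]
        exact min_le_right _ _
      · have e1 : ind σ t j = 1 := by rw [hind_def]; simp [c1]
        rw [e1, mul_one]
        have : 0 ≤ W σ' t * ind σ' t j := mul_nonneg (hWnn σ' t) (hind01 σ' t j).1
        linarith [min_le_left (W σ t) (W σ' t)]
    have : D ≤ 1 - Real.sqrt (2 * (1 - r ^ n)) := by rw [hD_def]; linarith
    linarith [hmin, hpaired]
  -- sum the paired bound over all σ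
  have Tbound : ∀ (j : Fin V), (j : ℕ) < V - 1 →
      (2 : ℝ) ^ V * D / 2 ≤ ∑ σ : Fin V → Bool, Ftil j σ := by
    intro j hj
    set φ : (Fin V → Bool) → (Fin V → Bool) := fun σ => Function.update σ j (!σ j) with hφ_def
    have hφinv : Function.Involutive φ := by
      intro σ
      funext k
      by_cases hk : k = j
      · subst hk
        rw [hφ_def]
        simp [Function.update_self]
      · rw [hφ_def]
        simp [Function.update_of_ne hk]
    have hcomp : ∑ σ : Fin V → Bool, Ftil j (φ σ) = ∑ σ : Fin V → Bool, Ftil j σ :=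
      Function.Bijective.sum_comp hφinv.bijective _
    have hsum2 : ∑ σ : Fin V → Bool, (Ftil j σ + Ftil j (φ σ))
        = 2 * ∑ σ : Fin V → Bool, Ftil j σ := by
      rw [Finset.sum_add_distrib, hcomp]; ring
    have hge : ∑ σ : Fin V → Bool, (Ftil j σ + Ftil j (φ σ))
        ≥ ∑ σ : Fin V → Bool, D :=
      Finset.sum_le_sum fun σ _ => pair j hj σ
    rw [Finset.sum_const, Finset.card_univ] at hge
    have hcard : (Fintype.card (Fin V → Bool) : ℝ) = 2 ^ V := by
      rw [Fintype.card_fun, Fintype.card_bool, Fintype.card_fin]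
      push_cast
      ring
    rw [nsmul_eq_mul, hcard] at hge
    rw [hsum2] at hge
    set S' := ∑ σ : Fin V → Bool, Ftil j σ with hS'_def
    clear_value S' D sq
    linarith
  -- total sum over σ
  set Tot : (Fin V → Bool) → ℝ := fun σ => ∑ t : Fin n → Fin V × Bool,
    W σ t * (∑ j, massC V p j * (h * ind σ t j)) with hTot_def
  have hTotnn : ∀ σ, 0 ≤ Tot σ := by
    intro σ
    refine Finset.sum_nonneg fun t _ => mul_nonneg (hWnn σ t) ?_
    refine Finset.sum_nonneg fun j _ => ?_
    exact mul_nonneg (massC_nonneg hp0.le hpV j) (mul_nonneg hh0.le (hind01 σ t j).1)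
  have hTotswap : ∀ σ, Tot σ = ∑ j, massC V p j * h * Ftil j σ := by
    intro σ
    rw [hTot_def]
    dsimp only
    rw [Finset.sum_congr rfl fun t _ => Finset.mul_sum _ _ _, Finset.sum_comm]
    refine Finset.sum_congr rfl fun j _ => ?_
    rw [hFtil_def]
    dsimp only
    rw [Finset.mul_sum]
    refine Finset.sum_congr rfl fun t _ => by ring
  have hS : ((V : ℝ) - 1) * (p * h * ((2 : ℝ) ^ V * D / 2))
      ≤ ∑ σ : Fin V → Bool, Tot σ := by
    have e1 : ∑ σ : Fin V → Bool, Tot σ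
        = ∑ j, massC V p j * h * (∑ σ : Fin V → Bool, Ftil j σ) := by
      rw [Finset.sum_congr rfl fun σ _ => hTotswap σ, Finset.sum_comm]
      exact Finset.sum_congr rfl fun j _ => (Finset.mul_sum _ _ _).symm
    rw [e1]
    have e2 : ∀ j : Fin V, (if (j : ℕ) < V - 1 then p * h * ((2 : ℝ) ^ V * D / 2) else 0)
        ≤ massC V p j * h * (∑ σ : Fin V → Bool, Ftil j σ) := by
      intro j
      by_cases hj : (j : ℕ) < V - 1
      · rw [if_pos hj, show massC V p j = p from if_pos hj]
        exact mul_le_mul_of_nonneg_left (Tbound j hj)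
          (by positivity : (0 : ℝ) ≤ p * h)
      · rw [if_neg hj]
        refine mul_nonneg (mul_nonneg (massC_nonneg hp0.le hpV j) hh0.le) ?_
        exact Finset.sum_nonneg fun σ _ => hFtilnn j σ
    calc ((V : ℝ) - 1) * (p * h * ((2 : ℝ) ^ V * D / 2))
        = ∑ j : Fin V, (if (j : ℕ) < V - 1 then p * h * ((2 : ℝ) ^ V * D / 2) else 0) := by
          rw [sum_ite_fin hV1]; ring
      _ ≤ _ := Finset.sum_le_sum fun j _ => e2 j
  -- conclude by averaging
  by_cases hD0 : D ≤ 0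
  · refine ⟨fun _ => false, ?_⟩
    have htarget : p * h / 4 * ((V : ℝ) - 1) * D ≤ 0 := by
      have h1 : 0 ≤ p * h / 4 * ((V : ℝ) - 1) := by positivity
      exact mul_nonpos_of_nonneg_of_nonpos h1 hD0
    exact le_trans htarget (hTotnn _)
  · push_neg at hD0
    by_contra hcon
    push_neg at hcon
    have hlt : ∑ σ : Fin V → Bool, Tot σ
        < ∑ σ : Fin V → Bool, (p * h / 4 * ((V : ℝ) - 1) * D) :=
      Finset.sum_lt_sum_of_nonempty Finset.univ_nonempty fun σ _ => hcon σ
    rw [Finset.sum_const, Finset.card_univ, nsmul_eq_mul] at hlt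
    have hcard : (Fintype.card (Fin V → Bool) : ℝ) = 2 ^ V := by
      rw [Fintype.card_fun, Fintype.card_bool, Fintype.card_fin]
      push_cast
      ring
    rw [hcard] at hlt
    have hfinal : (2 : ℝ) ^ V * (p * h / 4 * ((V : ℝ) - 1) * D)
        ≤ ((V : ℝ) - 1) * (p * h * ((2 : ℝ) ^ V * D / 2)) := by
      have h2V : (0 : ℝ) < 2 ^ V := by positivity
      nlinarith [mul_nonneg (mul_nonneg (mul_nonneg (mul_nonneg hp0.le hh0.le)
        (by linarith : (0 : ℝ) ≤ (V : ℝ) - 1)) hD0.le) h2V.le]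
    linarith [hS]

end Core


/-- **Assouad-type lower bound (proof of Theorem 2, before optimizing `p`).**
Under the SCAR assumption `e(x) = e_m` with `0 < e_m ≤ 1`, if `𝒮` has VC dimension
`V ≥ 2` and `h ∈ (0,1]`, then for every `0 < p < 1/(V−1)` the minimax risk satisfies
`R(S,h) ≥ (p·h/4)·(V−1)·(1 − √(2·p·e_m·h²·n))`. -/
theorem minimax_lower_bound_SCAR_Assouad
    (d : ℕ) (𝒮 : Set ((Fin d → ℝ) → ℝ)) (V n : ℕ) (e_m h p : ℝ)
    (h𝒮 : ∀ g ∈ 𝒮, IsClassifier g) (hVC : HasVCDim 𝒮 V) (hV : 2 ≤ V)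
    (hem0 : 0 < e_m) (hem1 : e_m ≤ 1) (hh0 : 0 < h) (hh1 : h ≤ 1)
    (hp0 : 0 < p) (hp1 : p < 1 / ((V : ℝ) - 1)) :
    p * h / 4 * ((V : ℝ) - 1) * (1 - Real.sqrt (2 * p * e_m * h ^ 2 * (n : ℝ))) ≤
      minimaxRisk (fun _ : Fin d → ℝ => e_m) 𝒮 h n := by
  classical
  have hV1 : 1 ≤ V := by omega
  have hVR : (1 : ℝ) ≤ (V : ℝ) - 1 := by
    have h2 : (2 : ℝ) ≤ (V : ℝ) := by exact_mod_cast hV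
    linarith
  have hVRpos : (0 : ℝ) < (V : ℝ) - 1 := by linarith
  have hpV : ((V : ℝ) - 1) * p ≤ 1 := by
    have := (lt_div_iff₀ hVRpos).mp hp1
    nlinarith
  obtain ⟨x, hx⟩ := hVC.1
  have choice : ∀ σ : Fin V → Bool, ∃ g, g ∈ 𝒮 ∧ ∀ i, g (x i) = biR (σ i) := by
    intro σ
    obtain ⟨g, hg𝒮, hgi⟩ := hx σ
    exact ⟨g, hg𝒮, fun i => by rw [hgi i]; rfl⟩
  choose G hG𝒮 hGx using choice
  have hGcl : ∀ σ, IsClassifier (G σ) := fun σ => h𝒮 _ (hG𝒮 σ)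
  have hadm : ∀ σ : Fin V → Bool,
      PUAdmissible (fun _ : Fin d → ℝ => e_m) 𝒮 h (muC V p h e_m σ x) (etaF h (G σ)) := by
    intro σ
    refine ⟨muC_prob hp0.le hpV hh0 hh1 hem0.le hem1 hV1,
      muC_coords hp0.le hpV hh0 hh1 hem0.le hem1,
      muC_regression hp0.le hpV hh0 hh1 hem0.le hem1 (hGcl σ).1 (hGcl σ).2 (hGx σ),
      muC_propensity hp0.le hpV hh0 hh1 hem0.le hem1 (hGcl σ).1 (hGcl σ).2 (hGx σ),
      ?_, margin_etaF hh0 hh1 (hGcl σ).2⟩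
    rw [bayes_etaF hh0 hh1 (hGcl σ).2]
    exact hG𝒮 σ
  haveI hne : Nonempty {f : (Fin n → (Fin d → ℝ) × ℝ) → (Fin d → ℝ) → ℝ // ∀ z, f z ∈ 𝒮} :=
    ⟨⟨fun _ => G (fun _ => false), fun _ => hG𝒮 _⟩⟩
  rw [_root_.minimaxRisk]
  refine le_ciInf fun ghat => ?_
  -- the estimator's answers on atom tuples, as booleans
  set χ : (Fin n → Fin V × Bool) → Fin V → Bool := fun t j =>
    if ghat.1 (fun i => ptnuC x (t i)) (x j) = 1 then true else false with hχ_def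
  -- value of the objective at each adversarial distribution
  have hval : ∀ σ : Fin V → Bool,
      (∫ z, excessRisk (muC V p h e_m σ x) (fun q => q.1) (fun q => q.2.1)
          (etaF h (G σ)) (ghat.1 z)
        ∂(Measure.pi fun _ : Fin n => (muC V p h e_m σ x).map (fun q => (q.1, q.2.2))))
      = ∑ t : Fin n → Fin V × Bool, (∏ i, wnuC V p h e_m σ (t i))
          * (∑ j, massC V p j * (h * (if χ t j ≠ σ j then (1 : ℝ) else 0))) := by
    intro σ
    rw [show ((muC V p h e_m σ x).map (fun q : (Fin d → ℝ) × ℝ × ℝ => (q.1, q.2.2)))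
        = atomicMeasure (wnuC V p h e_m σ) (ptnuC x) from
      map_muC hp0.le hpV hh0 hh1 hem0.le hem1]
    rw [pi_atomic n (wnuC_nonneg hp0.le hpV hh0.le hh1 hem0.le hem1) (ptnuC x)]
    rw [integral_atomic (fun t : Fin n → Fin V × Bool =>
      Finset.prod_nonneg fun i _ =>
        wnuC_nonneg hp0.le hpV hh0.le hh1 hem0.le hem1 (t i))]
    refine Finset.sum_congr rfl fun t _ => ?_
    have hcl := h𝒮 _ (ghat.2 (fun i => ptnuC x (t i)))
    rw [excess_muC hp0.le hpV hh0 hh1 hem0.le hem1 (hGcl σ).2 (hGx σ) hcl.2]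
    refine congrArg _ (Finset.sum_congr rfl fun j _ => ?_)
    have hindeq : (if ghat.1 (fun i => ptnuC x (t i)) (x j) ≠ biR (σ j) then (1:ℝ) else 0)
        = (if χ t j ≠ σ j then (1:ℝ) else 0) := by
      rcases hcl.2 (x j) with h0 | h0 <;> rw [hχ_def] <;> dsimp only <;>
        simp only [h0] <;> cases hσj : σ j <;> norm_num [biR]
    rw [hindeq]
  -- bounded above by 1
  have hbdd : BddAbove (Set.range fun q : {q : Measure ((Fin d → ℝ) × ℝ × ℝ)
        × ((Fin d → ℝ) → ℝ) // PUAdmissible (fun _ : Fin d → ℝ => e_m) 𝒮 h q.1 q.2} =>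
      ∫ z, excessRisk q.1.1 (fun p => p.1) (fun p => p.2.1) q.1.2 (ghat.1 z)
        ∂(Measure.pi fun _ : Fin n => q.1.1.map (fun p => (p.1, p.2.2)))) := by
    refine ⟨1, ?_⟩
    rintro v ⟨q, rfl⟩
    haveI hPq : IsProbabilityMeasure q.1.1 := q.2.1
    haveI : IsProbabilityMeasure (q.1.1.map (fun p : (Fin d → ℝ) × ℝ × ℝ => (p.1, p.2.2))) :=
      Measure.isProbabilityMeasure_map (measurable_fst.prodMk measurable_snd.snd).aemeasurable
    have hrisk : ∀ g : (Fin d → ℝ) → ℝ, risk q.1.1 (fun p => p.1) (fun p => p.2.1) g ∈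
        Set.Icc (0:ℝ) 1 := by
      intro g
      constructor
      · exact ENNReal.toReal_nonneg
      · refine ENNReal.toReal_le_of_le_ofReal zero_le_one ?_
        rw [ENNReal.ofReal_one]
        exact prob_le_one
    have hnorm := norm_integral_le_of_norm_le_const
      (μ := Measure.pi fun _ : Fin n => q.1.1.map (fun p : (Fin d → ℝ) × ℝ × ℝ => (p.1, p.2.2)))
      (f := fun z => excessRisk q.1.1 (fun p => p.1) (fun p => p.2.1) q.1.2 (ghat.1 z))
      (C := 1) ?_
    · rw [probReal_univ, mul_one] at hnorm
      exact le_trans (le_abs_self _) hnorm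
    · refine Filter.Eventually.of_forall fun z => ?_
      rw [Real.norm_eq_abs]
      obtain ⟨h1, h2⟩ := hrisk (ghat.1 z)
      obtain ⟨h3, h4⟩ := hrisk (bayes q.1.2)
      rw [show excessRisk q.1.1 (fun p => p.1) (fun p => p.2.1) q.1.2 (ghat.1 z)
          = risk q.1.1 (fun p => p.1) (fun p => p.2.1) (ghat.1 z)
            - risk q.1.1 (fun p => p.1) (fun p => p.2.1) (bayes q.1.2) from rfl]
      rw [abs_le]
      constructor <;> linarith
  obtain ⟨σ, hσ⟩ := assouad_core hV hp0 hpV hh0 hh1 hem0 hem1 χ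
  calc p * h / 4 * ((V : ℝ) - 1) * (1 - Real.sqrt (2 * p * e_m * h ^ 2 * (n : ℝ)))
      ≤ ∑ t : Fin n → Fin V × Bool, (∏ i, wnuC V p h e_m σ (t i))
          * (∑ j, massC V p j * (h * (if χ t j ≠ σ j then (1 : ℝ) else 0))) := hσ
    _ = ∫ z, excessRisk (muC V p h e_m σ x) (fun q => q.1) (fun q => q.2.1)
          (etaF h (G σ)) (ghat.1 z)
        ∂(Measure.pi fun _ : Fin n => (muC V p h e_m σ x).map (fun q => (q.1, q.2.2))) :=
        (hval σ).symm
    _ ≤ _ := le_ciSup hbdd ⟨(muC V p h e_m σ x, etaF h (G σ)), hadm σ⟩
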